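/- Let ∇ be a pseudoconnection on ξ with principal homomorphism P and let i ≥ 0. Then for every generator ω⊗s ∈ Ω^i(ξ), d^∇(d^∇(d^∇(ω⊗s))) = dω ∧ F^∇(s) + (−1)^i ω ∧ G^∇(s). -/

import Mathlib

/-!
Algebraic model of smooth forms with values in a vector bundle, following the paper's setup:
`R` plays the role of the ring `Ω⁰(M)` of smooth functions, `Ω k` of the `R`-module `Ω^k(M)`
of smooth `k`-forms, `S` of the `R`-module `Ω⁰(ξ)` of smooth sections of a vector bundle `ξ`,
and `Ω k ⊗[R] S` of `Ω^k(ξ) = Ω^k(M) ⊗_{Ω⁰(M)} Ω⁰(ξ)`.  A bundle homomorphism over the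
identity corresponds to an `R`-linear map `S →ₗ[R] S`; its induced action on `Ω^k(ξ)` is
`LinearMap.lTensor`.  `d0 : R →ₗ[ℝ] Ω 1` and `d k : Ω k →ₗ[ℝ] Ω (k+1)` model the exterior
derivative and `wedge` the wedge product of scalar forms.
-/

open TensorProduct

section PseudoConnections

variable {R : Type} [CommRing R] [Algebra ℝ R]
variable {Ω : ℕ → Type} [∀ k, AddCommGroup (Ω k)] [∀ k, Module R (Ω k)]
  [∀ k, Module ℝ (Ω k)] [∀ k, IsScalarTower ℝ R (Ω k)]
variable {S : Type} [AddCommGroup S] [Module R S] [Module ℝ S] [IsScalarTower ℝ R S]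

/-- The alternating product `β ∧_α ·  : Ω^l(ξ) → Ω^{k+l}(ξ)` induced by a bundle
homomorphism `α`, determined on generators by `β ∧_α (ω ⊗ s) = (β ∧ ω) ⊗ α s`.
Taking `α = LinearMap.id` gives the ordinary alternating product `∧`. -/
noncomputable def wedgeB (wedge : ∀ k l : ℕ, Ω k →ₗ[R] Ω l →ₗ[R] Ω (k + l))
    (k l : ℕ) (α : S →ₗ[R] S) (β : Ω k) : Ω l ⊗[R] S →ₗ[R] Ω (k + l) ⊗[R] S :=
  LinearMap.rTensor S (wedge k l β) ∘ₗ LinearMap.lTensor (Ω l) α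

/-- Cast between scalar form degrees. -/
noncomputable def mcast {a b : ℕ} (h : a = b) : Ω a ≃ₗ[ℝ] Ω b := by
  subst h; exact LinearEquiv.refl ℝ _

/-- Cast between bundle-valued form degrees. -/
noncomputable def ocast {a b : ℕ} (h : a = b) : Ω a ⊗[R] S ≃ₗ[ℝ] Ω b ⊗[R] S := by
  subst h; exact LinearEquiv.refl ℝ _

/-- `E^∇ = d^∇ ∘ ∇`. -/
noncomputable def Emap (nabla : S →ₗ[ℝ] Ω 1 ⊗[R] S)
    (D : ∀ k, Ω k ⊗[R] S →ₗ[ℝ] Ω (k+1) ⊗[R] S) : S → Ω 2 ⊗[R] S :=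
  fun s => D 1 (nabla s)

/-- `L^∇ = P ∘ ∇ − ∇ ∘ P`. -/
noncomputable def Lmap (P : S →ₗ[R] S) (nabla : S →ₗ[ℝ] Ω 1 ⊗[R] S) : S → Ω 1 ⊗[R] S :=
  fun s => LinearMap.lTensor (Ω 1) P (nabla s) - nabla (P s)

/-- The curvature form `F^∇ = P ∘ d^∇ ∘ ∇ − d^∇ ∘ P ∘ ∇ + d^∇ ∘ ∇ ∘ P`. -/
noncomputable def Fmap (P : S →ₗ[R] S) (nabla : S →ₗ[ℝ] Ω 1 ⊗[R] S)
    (D : ∀ k, Ω k ⊗[R] S →ₗ[ℝ] Ω (k+1) ⊗[R] S) : S → Ω 2 ⊗[R] S :=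
  fun s => LinearMap.lTensor (Ω 2) P (D 1 (nabla s)) - D 1 (LinearMap.lTensor (Ω 1) P (nabla s))
    + D 1 (nabla (P s))

/-- `G^∇ = d^∇ ∘ d^∇ ∘ ∇`. -/
noncomputable def Gmap (nabla : S →ₗ[ℝ] Ω 1 ⊗[R] S)
    (D : ∀ k, Ω k ⊗[R] S →ₗ[ℝ] Ω (k+1) ⊗[R] S) : S → Ω 3 ⊗[R] S :=
  fun s => D 2 (D 1 (nabla s))


set_option linter.unusedSectionVars false

section Aux
variable (wedge : ∀ k l : ℕ, Ω k →ₗ[R] Ω l →ₗ[R] Ω (k + l))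

lemma mcast_heq {a b : ℕ} (h : a = b) (x : Ω a) :
    HEq (mcast (Ω := Ω) h x) x := by subst h; rfl

lemma wedgeB_tmul (k l : ℕ) (α : S →ₗ[R] S) (β : Ω k) (η : Ω l) (s : S) :
    wedgeB wedge k l α β (η ⊗ₜ[R] s) = wedge k l β η ⊗ₜ[R] α s := by
  simp [wedgeB]

lemma wedgeB_zero (k l : ℕ) (α : S →ₗ[R] S) (t : Ω l ⊗[R] S) :
    wedgeB wedge k l α (0 : Ω k) t = 0 := by
  simp [wedgeB]

lemma wedgeB_P (k l : ℕ) (P : S →ₗ[R] S) (β : Ω k) (t : Ω l ⊗[R] S) :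
    wedgeB wedge k l P β t
      = wedgeB wedge k l LinearMap.id β (LinearMap.lTensor (Ω l) P t) := by
  simp only [wedgeB, LinearMap.comp_apply, LinearMap.lTensor_id, LinearMap.id_apply]

lemma wedgeB_assoc11
    (hassoc : ∀ (k l m : ℕ) (ω : Ω k) (η : Ω l) (ζ : Ω m),
      wedge (k+l) m (wedge k l ω η) ζ
        = mcast (show k+(l+m) = (k+l)+m from (Nat.add_assoc k l m).symm) (wedge k (l+m) ω (wedge l m η ζ)))
    (k : ℕ) (ω : Ω k) (η : Ω 1) (t : Ω 1 ⊗[R] S) :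
    wedgeB wedge (k+1) 1 LinearMap.id (wedge k 1 ω η) t
      = wedgeB wedge k 2 LinearMap.id ω (wedgeB wedge 1 1 LinearMap.id η t) := by
  induction t using TensorProduct.induction_on with
  | zero => simp
  | tmul τ s =>
      rw [wedgeB_tmul, wedgeB_tmul, wedgeB_tmul]
      have h1 : wedge (k+1) 1 (wedge k 1 ω η) τ = wedge k 2 ω (wedge 1 1 η τ) := by
        rw [hassoc k 1 1]; exact eq_of_heq (mcast_heq _ _)
      rw [h1]; rfl
  | add x y hx hy => simp [map_add, hx, hy]

lemma wedgeB_assoc21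
    (hassoc : ∀ (k l m : ℕ) (ω : Ω k) (η : Ω l) (ζ : Ω m),
      wedge (k+l) m (wedge k l ω η) ζ
        = mcast (show k+(l+m) = (k+l)+m from (Nat.add_assoc k l m).symm) (wedge k (l+m) ω (wedge l m η ζ)))
    (k : ℕ) (ω : Ω k) (η : Ω 2) (t : Ω 1 ⊗[R] S) :
    wedgeB wedge (k+2) 1 LinearMap.id (wedge k 2 ω η) t
      = wedgeB wedge k 3 LinearMap.id ω (wedgeB wedge 2 1 LinearMap.id η t) := by
  induction t using TensorProduct.induction_on with
  | zero => simp
  | tmul τ s =>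
      rw [wedgeB_tmul, wedgeB_tmul, wedgeB_tmul]
      have h1 : wedge (k+2) 1 (wedge k 2 ω η) τ = wedge k 3 ω (wedge 2 1 η τ) := by
        rw [hassoc k 2 1]; exact eq_of_heq (mcast_heq _ _)
      rw [h1]; rfl
  | add x y hx hy => simp [map_add, hx, hy]

lemma D_wedgeB1
    (d : ∀ k, Ω k →ₗ[ℝ] Ω (k+1))
    (hd_wedge : ∀ (k l : ℕ) (ω : Ω k) (η : Ω l),
      d (k+l) (wedge k l ω η)
        = mcast (show (k+1)+l = (k+l)+1 from Nat.add_right_comm k 1 l) (wedge (k+1) l (d k ω) η)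
          + ((-1:ℤ)^k) • (show Ω (k+l+1) from wedge k (l+1) ω (d l η)))
    (hassoc : ∀ (k l m : ℕ) (ω : Ω k) (η : Ω l) (ζ : Ω m),
      wedge (k+l) m (wedge k l ω η) ζ
        = mcast (show k+(l+m) = (k+l)+m from (Nat.add_assoc k l m).symm) (wedge k (l+m) ω (wedge l m η ζ)))
    (P : S →ₗ[R] S) (nabla : S →ₗ[ℝ] Ω 1 ⊗[R] S)
    (D : ∀ k, Ω k ⊗[R] S →ₗ[ℝ] Ω (k+1) ⊗[R] S)
    (hD : ∀ (k : ℕ) (ω : Ω k) (s : S),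
      D k (ω ⊗ₜ[R] s) = d k ω ⊗ₜ[R] P s
        + ((-1:ℤ)^k) • wedgeB wedge k 1 LinearMap.id ω (nabla s))
    (k : ℕ) (ω : Ω k) (t : Ω 1 ⊗[R] S) :
    D (k+1) (wedgeB wedge k 1 LinearMap.id ω t)
      = wedgeB wedge (k+1) 1 P (d k ω) t
        + ((-1:ℤ)^k) • wedgeB wedge k 2 LinearMap.id ω (D 1 t) := by
  induction t using TensorProduct.induction_on with
  | zero => simp
  | tmul η s =>
      rw [wedgeB_tmul, wedgeB_tmul]
      have hdw : d (k+1) (wedge k 1 ω η)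
          = wedge (k+1) 1 (d k ω) η + ((-1:ℤ)^k) • wedge k 2 ω (d 1 η) := by
        rw [hd_wedge k 1]
        congr 1
      rw [hD (k+1), hD 1, hdw, wedgeB_assoc11 wedge hassoc]
      simp only [LinearMap.id_apply, map_add, map_smul, wedgeB_tmul, add_tmul,
        smul_tmul', pow_succ, mul_smul, smul_add, neg_smul, one_smul, smul_neg,
        pow_one, neg_neg, map_zsmul, pow_zero, map_neg, neg_one_zsmul, add_assoc]
  | add x y hx hy =>
      simp only [map_add, hx, hy, smul_add]
      abel

lemma D_wedgeB2
    (d : ∀ k, Ω k →ₗ[ℝ] Ω (k+1))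
    (hd_wedge : ∀ (k l : ℕ) (ω : Ω k) (η : Ω l),
      d (k+l) (wedge k l ω η)
        = mcast (show (k+1)+l = (k+l)+1 from Nat.add_right_comm k 1 l) (wedge (k+1) l (d k ω) η)
          + ((-1:ℤ)^k) • (show Ω (k+l+1) from wedge k (l+1) ω (d l η)))
    (hassoc : ∀ (k l m : ℕ) (ω : Ω k) (η : Ω l) (ζ : Ω m),
      wedge (k+l) m (wedge k l ω η) ζ
        = mcast (show k+(l+m) = (k+l)+m from (Nat.add_assoc k l m).symm) (wedge k (l+m) ω (wedge l m η ζ)))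
    (P : S →ₗ[R] S) (nabla : S →ₗ[ℝ] Ω 1 ⊗[R] S)
    (D : ∀ k, Ω k ⊗[R] S →ₗ[ℝ] Ω (k+1) ⊗[R] S)
    (hD : ∀ (k : ℕ) (ω : Ω k) (s : S),
      D k (ω ⊗ₜ[R] s) = d k ω ⊗ₜ[R] P s
        + ((-1:ℤ)^k) • wedgeB wedge k 1 LinearMap.id ω (nabla s))
    (k : ℕ) (ω : Ω k) (t : Ω 2 ⊗[R] S) :
    D (k+2) (wedgeB wedge k 2 LinearMap.id ω t)
      = wedgeB wedge (k+1) 2 P (d k ω) t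
        + ((-1:ℤ)^k) • wedgeB wedge k 3 LinearMap.id ω (D 2 t) := by
  induction t using TensorProduct.induction_on with
  | zero => simp
  | tmul η s =>
      rw [wedgeB_tmul, wedgeB_tmul]
      have hdw : d (k+2) (wedge k 2 ω η)
          = wedge (k+1) 2 (d k ω) η + ((-1:ℤ)^k) • wedge k 3 ω (d 2 η) := by
        rw [hd_wedge k 2]
        congr 1
      rw [hD (k+2), hD 2, hdw, wedgeB_assoc21 wedge hassoc]
      simp only [LinearMap.id_apply, map_add, map_smul, wedgeB_tmul, add_tmul,
        smul_tmul', pow_succ, mul_smul, smul_add, neg_smul, one_smul, smul_neg,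
        pow_one, neg_neg, map_zsmul, pow_zero, map_neg, neg_one_zsmul, add_assoc]
  | add x y hx hy =>
      simp only [map_add, hx, hy, smul_add]
      abel

lemma npss {M : Type} [AddCommGroup M] (n : ℕ) (x : M) :
    ((-1:ℤ)^n) • ((-1:ℤ)^n) • x = x := by
  rw [smul_smul, ← pow_add, Even.neg_one_pow ⟨n, rfl⟩, one_smul]

lemma npss' {M : Type} [AddCommGroup M] (n : ℕ) (x : M) :
    ((-1:ℤ)^n) • ((-1:ℤ)^(n+1)) • x = -x := by
  rw [smul_smul, ← pow_add]
  rw [Odd.neg_one_pow ⟨n, by ring⟩, neg_one_zsmul]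

lemma npss'' {M : Type} [AddCommGroup M] (n : ℕ) (x : M) :
    ((-1:ℤ)^(n+1)) • ((-1:ℤ)^n) • x = -x := by
  rw [smul_smul, ← pow_add]
  rw [Odd.neg_one_pow ⟨n, by ring⟩, neg_one_zsmul]

end Aux

/-- For a pseudoconnection `∇` on `ξ` with principal homomorphism `P`
and `i ≥ 0`, on every generator `ω ⊗ s ∈ Ω^i(ξ)` one has
`d^∇(d^∇(d^∇(ω⊗s))) = dω ∧ F^∇(s) + (−1)^i ω ∧ G^∇(s)`. -/
theorem D_D_D_on_generators
    (d0 : R →ₗ[ℝ] Ω 1) (d : ∀ k, Ω k →ₗ[ℝ] Ω (k+1))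
    (wedge : ∀ k l : ℕ, Ω k →ₗ[R] Ω l →ₗ[R] Ω (k + l))
    -- axioms of the smooth context: `d∘d = 0`, graded Leibniz rule, associativity
    (hdd : ∀ (k : ℕ) (ω : Ω k), d (k+1) (d k ω) = 0)
    (hd_wedge : ∀ (k l : ℕ) (ω : Ω k) (η : Ω l),
      d (k+l) (wedge k l ω η)
        = mcast (show (k+1)+l = (k+l)+1 by omega) (wedge (k+1) l (d k ω) η)
          + ((-1:ℤ)^k) • (show Ω (k+l+1) from wedge k (l+1) ω (d l η)))
    (hassoc : ∀ (k l m : ℕ) (ω : Ω k) (η : Ω l) (ζ : Ω m),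
      wedge (k+l) m (wedge k l ω η) ζ
        = mcast (show k+(l+m) = (k+l)+m by omega) (wedge k (l+m) ω (wedge l m η ζ)))
    -- the pseudoconnection with principal homomorphism `P`
    (P : S →ₗ[R] S) (nabla : S →ₗ[ℝ] Ω 1 ⊗[R] S)
    (hLeib : ∀ (f : R) (s : S), nabla (f • s) = d0 f ⊗ₜ[R] P s + f • nabla s)
    -- its exterior derivative, determined on generators
    (D : ∀ k, Ω k ⊗[R] S →ₗ[ℝ] Ω (k+1) ⊗[R] S)
    (hD : ∀ (k : ℕ) (ω : Ω k) (s : S),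
      D k (ω ⊗ₜ[R] s) = d k ω ⊗ₜ[R] P s
        + ((-1:ℤ)^k) • wedgeB wedge k 1 LinearMap.id ω (nabla s)) :
    ∀ (i : ℕ) (ω : Ω i) (s : S),
      D (i+2) (D (i+1) (D i (ω ⊗ₜ[R] s)))
        = wedgeB wedge (i+1) 2 LinearMap.id (d i ω) (Fmap P nabla D s)
          + ((-1:ℤ)^i) • wedgeB wedge i 3 LinearMap.id ω (Gmap nabla D s) := by
  intro i ω s
  rw [hD i ω s, map_add, map_zsmul,
    hD (i+1) (d i ω) (P s), hdd i ω, zero_tmul, zero_add,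
    D_wedgeB1 wedge d hd_wedge hassoc P nabla D hD i ω (nabla s)]
  simp only [map_add, map_zsmul]
  rw [D_wedgeB1 wedge d hd_wedge hassoc P nabla D hD (i+1) (d i ω) (nabla (P s)),
    wedgeB_P wedge (i+1) 1 P (d i ω) (nabla s),
    D_wedgeB1 wedge d hd_wedge hassoc P nabla D hD (i+1) (d i ω)
      (LinearMap.lTensor (Ω 1) P (nabla s)),
    D_wedgeB2 wedge d hd_wedge hassoc P nabla D hD i ω (D 1 (nabla s)),
    hdd i ω]
  simp only [wedgeB_zero, zero_add]
  rw [wedgeB_P wedge (i+1) 2 P (d i ω) (D 1 (nabla s))]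
  simp only [Fmap, Gmap, map_add, map_sub, smul_add, npss, npss', npss'']
  abel

end PseudoConnections
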